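/- Let N be a finite nonempty set of flows with positive weights φ_j > 0, served by a GPS scheduler with arrival processes (A_j)_{j∈N}, departure processes (D_j)_{j∈N}, and service process C. Let M ⊆ N and let (x_j)_{j∈M} be nonnegative numbers that are feasible for the resource X = 1, i.e., for every k ∈ M: (x_k/φ_k)·Σ_{j∈N\M} φ_j ≤ 1 − Σ_{j∈M} x_j. Define B_j*(t) := sup_{0 ≤ r ≤ t} { (A_j(t) − A_j(r)) − x_j·(C(t) − C(r)) }. Then for all 0 ≤ s ≤ t: Σ_{j∈M} (D_j(t) − D_j(s)) ≤ Σ_{j∈M} ( B_j*(t) + x_j·(C(t) − C(s)) ). -/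

import Mathlib

open Filter Topology Set

/-- If a left-continuous function vanishes at `0` but not at `v ≥ 0`, there is a last
time `w < v` where it vanishes, and it is nonzero on `(w, v]`. -/
private lemma exists_last_zero (f : ℝ → ℝ)
    (hlc : ∀ u : ℝ, ContinuousWithinAt f (Set.Iio u) u)
    (v : ℝ) (hv0 : 0 ≤ v) (h0 : f 0 = 0) (hv : f v ≠ 0) :
    ∃ w, 0 ≤ w ∧ w < v ∧ f w = 0 ∧ ∀ u, w < u → u ≤ v → f u ≠ 0 := by
  classical
  set E : Set ℝ := {u | u ∈ Set.Icc (0:ℝ) v ∧ f u = 0} with hEdef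
  have hE0 : (0:ℝ) ∈ E := ⟨⟨le_rfl, hv0⟩, h0⟩
  have hEne : E.Nonempty := ⟨0, hE0⟩
  have hEbdd : BddAbove E := ⟨v, fun u hu => hu.1.2⟩
  have hlub : IsLUB E (sSup E) := isLUB_csSup hEne hEbdd
  set w := sSup E with hwdef
  have hw0 : 0 ≤ w := hlub.1 hE0
  have hwv : w ≤ v := hlub.2 fun u hu => hu.1.2
  have hfw : f w = 0 := by
    by_cases hwE : w ∈ E
    · exact hwE.2
    · have hne : (𝓝[E] w).NeBot := hlub.nhdsWithin_neBot hEne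
      have hsub : E ⊆ insert w (Set.Iio w) := by
        intro u hu
        rcases eq_or_lt_of_le (hlub.1 hu) with h | h
        · exact Set.mem_insert_iff.2 (Or.inl h)
        · exact Set.mem_insert_iff.2 (Or.inr h)
      have hc : ContinuousWithinAt f E w :=
        ((continuousWithinAt_insert_self).2 (hlc w)).mono hsub
      have h1 : Tendsto f (𝓝[E] w) (𝓝 (f w)) := hc
      have h2 : Tendsto f (𝓝[E] w) (𝓝 0) := by
        refine Tendsto.congr' ?_ tendsto_const_nhds
        filter_upwards [self_mem_nhdsWithin] with u hu
        exact hu.2.symm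
      exact tendsto_nhds_unique h1 h2
  have hwltv : w < v := lt_of_le_of_ne hwv (fun h => hv (h ▸ hfw))
  refine ⟨w, hw0, hwltv, hfw, ?_⟩
  intro u h1 h2 hfu
  have hu : u ∈ E := ⟨⟨le_trans hw0 h1.le, h2⟩, hfu⟩
  exact absurd (hlub.1 hu) (not_le.2 h1)

/-- **Output burstiness.** If `(x_j)_{j∈M}` is a feasible subset of
nonnegative requests for the resource `X = 1`, then the departures from a GPS
scheduler satisfy, for all `0 ≤ s ≤ t`,
`∑_{j∈M} D_j(s,t) ≤ ∑_{j∈M} (B*_j(t) + x_j (C(t) - C(s)))`, where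
`B*_j(t) = sup_{0 ≤ r ≤ t} {(A_j(t) - A_j(r)) - x_j (C(t) - C(r))}`. -/
theorem gps_output_burstiness {ι : Type*} [DecidableEq ι] (N : Finset ι) (hN : N.Nonempty)
    (φ : ι → ℝ) (A D : ι → ℝ → ℝ) (C : ℝ → ℝ)
    (hφ : ∀ j ∈ N, 0 < φ j)
    (hAmono : ∀ j ∈ N, Monotone (A j))
    (hAlc : ∀ j ∈ N, ∀ t : ℝ, ContinuousWithinAt (A j) (Set.Iio t) t)
    (hAzero : ∀ j ∈ N, ∀ t : ℝ, t ≤ 0 → A j t = 0)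
    (hDmono : ∀ j ∈ N, Monotone (D j))
    (hDlc : ∀ j ∈ N, ∀ t : ℝ, ContinuousWithinAt (D j) (Set.Iio t) t)
    (hDzero : ∀ j ∈ N, ∀ t : ℝ, t ≤ 0 → D j t = 0)
    (hCmono : Monotone C)
    (hClc : ∀ t : ℝ, ContinuousWithinAt C (Set.Iio t) t)
    (hCzero : ∀ t : ℝ, t ≤ 0 → C t = 0)
    (hDA : ∀ j ∈ N, ∀ t : ℝ, D j t ≤ A j t)
    (hwork_le : ∀ s t : ℝ, 0 ≤ s → s ≤ t → ∑ j ∈ N, (D j t - D j s) ≤ C t - C s)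
    (hwork_eq : ∀ s t : ℝ, 0 ≤ s → s ≤ t →
      (∀ u : ℝ, s < u → u < t → 0 < ∑ j ∈ N, (A j u - D j u)) →
      ∑ j ∈ N, (D j t - D j s) = C t - C s)
    (hfair : ∀ s t : ℝ, 0 ≤ s → s < t → ∀ i ∈ N,
      (∀ u : ℝ, s < u → u < t → 0 < A i u - D i u) →
      ∀ j ∈ N, (D j t - D j s) / φ j ≤ (D i t - D i s) / φ i)
    (M : Finset ι) (hM : M ⊆ N)
    (x : ι → ℝ) (hx : ∀ j ∈ M, 0 ≤ x j)
    (hfeas : ∀ k ∈ M, (x k / φ k) * ∑ j ∈ N \ M, φ j ≤ 1 - ∑ j ∈ M, x j) :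
    ∀ s t : ℝ, 0 ≤ s → s ≤ t →
      ∑ j ∈ M, (D j t - D j s) ≤
        ∑ j ∈ M,
          (sSup ((fun r => (A j t - A j r) - x j * (C t - C r)) '' Set.Icc 0 t) +
            x j * (C t - C s)) := by
  classical
  intro s t hs hst
  set Bs : ι → ℝ → ℝ :=
    fun j v => sSup ((fun r => (A j v - A j r) - x j * (C v - C r)) '' Set.Icc 0 v) with hBdef
  set S : ℝ := ∑ j ∈ M, x j with hSdef
  set Φp : ℝ := ∑ j ∈ N \ M, φ j with hPdef
  have ht0 : (0:ℝ) ≤ t := hs.trans hst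
  -- basic nonnegativity
  have hA0 : ∀ j ∈ N, ∀ v : ℝ, 0 ≤ v → 0 ≤ A j v := by
    intro j hj v hv
    have h := hAmono j hj hv
    rwa [hAzero j hj 0 le_rfl] at h
  have hD0 : ∀ j ∈ N, ∀ v : ℝ, 0 ≤ v → 0 ≤ D j v := by
    intro j hj v hv
    have h := hDmono j hj hv
    rwa [hDzero j hj 0 le_rfl] at h
  -- facts about Bs
  have hBbdd : ∀ j ∈ M, ∀ v : ℝ, 0 ≤ v →
      BddAbove ((fun r => (A j v - A j r) - x j * (C v - C r)) '' Set.Icc 0 v) := by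
    intro j hj v hv
    refine ⟨A j v, ?_⟩
    rintro _ ⟨r, hr, rfl⟩
    have h1 : 0 ≤ A j r := hA0 j (hM hj) r hr.1
    have h2 : 0 ≤ x j * (C v - C r) :=
      mul_nonneg (hx j hj) (sub_nonneg.2 (hCmono hr.2))
    dsimp only
    linarith
  have hBelem : ∀ j ∈ M, ∀ v : ℝ, 0 ≤ v → ∀ r : ℝ, 0 ≤ r → r ≤ v →
      (A j v - A j r) - x j * (C v - C r) ≤ Bs j v := by
    intro j hj v hv r hr0 hrv
    exact le_csSup (hBbdd j hj v hv) ⟨r, ⟨hr0, hrv⟩, rfl⟩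
  have hB0 : ∀ j ∈ M, ∀ v : ℝ, 0 ≤ v → 0 ≤ Bs j v := by
    intro j hj v hv
    have h := hBelem j hj v hv v hv le_rfl
    simpa using h
  have hBcarry : ∀ j ∈ M, ∀ w v : ℝ, 0 ≤ w → w ≤ v →
      Bs j w + ((A j v - A j w) - x j * (C v - C w)) ≤ Bs j v := by
    intro j hj w v hw0 hwv
    have hne : ((fun r => (A j w - A j r) - x j * (C w - C r)) '' Set.Icc 0 w).Nonempty :=
      ⟨_, ⟨w, ⟨hw0, le_rfl⟩, rfl⟩⟩
    have key : Bs j w ≤ Bs j v - ((A j v - A j w) - x j * (C v - C w)) := by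
      refine csSup_le hne ?_
      rintro _ ⟨r, hr, rfl⟩
      have h := hBelem j hj v (hw0.trans hwv) r hr.1 (hr.2.trans hwv)
      dsimp only
      linarith
    linarith
  set Gf : ℝ → ℝ := fun v => ∑ j ∈ M, ((A j v - D j v) - Bs j v) with hGdef
  have hGfeq : ∀ u : ℝ, Gf u = ∑ j ∈ M, ((A j u - D j u) - Bs j u) := fun _ => rfl
  -- L1 : carry bound for Gf
  have hL1 : ∀ w v : ℝ, 0 ≤ w → w ≤ v →
      Gf v ≤ Gf w + S * (C v - C w) - ∑ j ∈ M, (D j v - D j w) := by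
    intro w v hw0 hwv
    have hsum : ∀ j ∈ M, (A j v - D j v) - Bs j v ≤
        ((A j w - D j w) - Bs j w) + (x j * (C v - C w) - (D j v - D j w)) := by
      intro j hj
      have h := hBcarry j hj w v hw0 hwv
      linarith
    have h1 : Gf v ≤ ∑ j ∈ M,
        (((A j w - D j w) - Bs j w) + (x j * (C v - C w) - (D j v - D j w))) := by
      rw [hGfeq v]; exact Finset.sum_le_sum hsum
    have h2 : ∑ j ∈ M,
        (((A j w - D j w) - Bs j w) + (x j * (C v - C w) - (D j v - D j w)))
        = Gf w + (S * (C v - C w) - ∑ j ∈ M, (D j v - D j w)) := by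
      rw [Finset.sum_add_distrib, ← hGfeq w]
      congr 1
      rw [Finset.sum_sub_distrib]
      congr 1
      exact (Finset.sum_mul M x (C v - C w)).symm
    rw [h2] at h1
    linarith
  -- dispose of the trivial case M = ∅
  rcases M.eq_empty_or_nonempty with hMe | hMne
  · simp [hMe]
  -- S ≤ 1
  have hΦp0 : 0 ≤ Φp :=
    Finset.sum_nonneg fun k hk => (hφ k (Finset.mem_sdiff.1 hk).1).le
  have hS1 : S ≤ 1 := by
    obtain ⟨k, hk⟩ := hMne
    have h := hfeas k hk
    have h0 : 0 ≤ (x k / φ k) * Φp :=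
      mul_nonneg (div_nonneg (hx k hk) (hφ k (hM hk)).le) hΦp0
    linarith
  rcases eq_or_lt_of_le hS1 with hSeq | hSlt
  · -- case S = 1 : direct via work conservation
    have h1 : ∑ j ∈ M, (D j t - D j s) ≤ ∑ j ∈ N, (D j t - D j s) :=
      Finset.sum_le_sum_of_subset_of_nonneg hM
        (fun k hk _ => sub_nonneg.2 (hDmono k hk hst))
    have h2 := hwork_le s t hs hst
    have h3 : C t - C s = ∑ j ∈ M, x j * (C t - C s) := by
      have e : S * (C t - C s) = ∑ j ∈ M, x j * (C t - C s) :=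
        Finset.sum_mul M x (C t - C s)
      rw [← e, hSeq, one_mul]
    have h4 : ∑ j ∈ M, x j * (C t - C s) ≤ ∑ j ∈ M, (Bs j t + x j * (C t - C s)) :=
      Finset.sum_le_sum fun j hj => by have := hB0 j hj t ht0; linarith
    calc ∑ j ∈ M, (D j t - D j s) ≤ C t - C s := h1.trans h2
      _ = ∑ j ∈ M, x j * (C t - C s) := h3
      _ ≤ ∑ j ∈ M, (Bs j t + x j * (C t - C s)) := h4
  -- main case : S < 1
  have h1S : (0:ℝ) < 1 - S := by linarith
  -- the sup of Gf over [0, s]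
  have hgbdd : BddAbove (Gf '' Set.Icc 0 s) := by
    refine ⟨∑ j ∈ M, A j s, ?_⟩
    rintro _ ⟨v, hv, rfl⟩
    refine Finset.sum_le_sum fun j hj => ?_
    have h1 := hD0 j (hM hj) v hv.1
    have h2 := hB0 j hj v hv.1
    have h3 : A j v ≤ A j s := hAmono j (hM hj) hv.2
    linarith
  have hgne : (Gf '' Set.Icc 0 s).Nonempty := ⟨Gf 0, ⟨0, ⟨le_rfl, hs⟩, rfl⟩⟩
  set g : ℝ := sSup (Gf '' Set.Icc 0 s) with hgdef
  have hgG : ∀ v : ℝ, 0 ≤ v → v ≤ s → Gf v ≤ g :=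
    fun v h1 h2 => le_csSup hgbdd ⟨v, ⟨h1, h2⟩, rfl⟩
  -- the master inequality
  have hmaster : ∀ v : ℝ, 0 ≤ v → v ≤ s → (1 - S) * Gf v ≤ S * (g - Gf v) := by
    intro v hv0 hvs
    have hperj : ∀ j ∈ M,
        (1 - S) * ((A j v - D j v) - Bs j v) ≤ x j * (g - Gf v) := by
      intro j hj
      by_cases hb : D j v < A j v
      · -- j backlogged at v
        have flc : ∀ u : ℝ, ContinuousWithinAt (fun u => A j u - D j u) (Set.Iio u) u :=
          fun u => (hAlc j (hM hj) u).sub (hDlc j (hM hj) u)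
        have f0 : A j 0 - D j 0 = 0 := by
          rw [hAzero j (hM hj) 0 le_rfl, hDzero j (hM hj) 0 le_rfl]; ring
        have fv : A j v - D j v ≠ 0 := ne_of_gt (sub_pos.2 hb)
        obtain ⟨w, hw0, hwv, hfw, hlast⟩ :=
          exists_last_zero (fun u => A j u - D j u) flc v hv0 f0 fv
        have hback : ∀ u, w < u → u ≤ v → 0 < A j u - D j u := by
          intro u h1 h2
          exact lt_of_le_of_ne (sub_nonneg.2 (hDA j (hM hj) u)) (Ne.symm (hlast u h1 h2))
        -- work conservation on (w, v]
        have hwc : ∑ k ∈ N, (D k v - D k w) = C v - C w := by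
          refine hwork_eq w v hw0 hwv.le ?_
          intro u hu1 hu2
          exact lt_of_lt_of_le (hback u hu1 hu2.le)
            (Finset.single_le_sum (fun k hk => sub_nonneg.2 (hDA k hk u)) (hM hj))
        -- fairness on (w, v]
        have hfairk : ∀ k ∈ N, φ j * (D k v - D k w) ≤ φ k * (D j v - D j w) := by
          intro k hk
          have h := hfair w v hw0 hwv j (hM hj) (fun u h1 h2 => hback u h1 h2.le) k hk
          rw [div_le_div_iff₀ (hφ k hk) (hφ j (hM hj))] at h
          linarith
        have hsplit : (∑ k ∈ N \ M, (D k v - D k w)) + ∑ k ∈ M, (D k v - D k w)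
            = C v - C w := by rw [Finset.sum_sdiff hM]; exact hwc
        have hQb : φ j * (∑ k ∈ N \ M, (D k v - D k w)) ≤ Φp * (D j v - D j w) := by
          have h1 : φ j * (∑ k ∈ N \ M, (D k v - D k w))
              = ∑ k ∈ N \ M, φ j * (D k v - D k w) := Finset.mul_sum _ _ _
          have h2 : ∑ k ∈ N \ M, φ j * (D k v - D k w)
              ≤ ∑ k ∈ N \ M, φ k * (D j v - D j w) :=
            Finset.sum_le_sum fun k hk => hfairk k (Finset.mem_sdiff.1 hk).1
          have h3 : ∑ k ∈ N \ M, φ k * (D j v - D j w) = Φp * (D j v - D j w) :=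
            (Finset.sum_mul _ _ _).symm
          linarith
        have hDj0 : 0 ≤ D j v - D j w := sub_nonneg.2 (hDmono j (hM hj) hwv.le)
        have hpj : 0 < φ j := hφ j (hM hj)
        have hfj : x j * Φp ≤ (1 - S) * φ j := by
          have h := hfeas j hj
          rw [div_mul_eq_mul_div, div_le_iff₀ hpj] at h
          linarith
        have hxQ : x j * (∑ k ∈ N \ M, (D k v - D k w)) ≤ (1 - S) * (D j v - D j w) := by
          have h1 : x j * (φ j * (∑ k ∈ N \ M, (D k v - D k w)))
              ≤ x j * (Φp * (D j v - D j w)) :=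
            mul_le_mul_of_nonneg_left hQb (hx j hj)
          have h2 : (x j * Φp) * (D j v - D j w) ≤ ((1 - S) * φ j) * (D j v - D j w) :=
            mul_le_mul_of_nonneg_right hfj hDj0
          have h3 : φ j * (x j * (∑ k ∈ N \ M, (D k v - D k w)))
              ≤ φ j * ((1 - S) * (D j v - D j w)) := by nlinarith
          exact le_of_mul_le_mul_left h3 hpj
        have hADw : A j w = D j w := by linarith [hfw]
        have hterm : (A j v - D j v) - Bs j v ≤ x j * (C v - C w) - (D j v - D j w) := by
          have h := hBelem j hj v hv0 w hw0 hwv.le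
          linarith
        -- group deficit bound via L1
        have hL1' := hL1 w v hw0 hwv.le
        have hGfw : Gf w ≤ g := hgG w hw0 (hwv.le.trans hvs)
        -- (1-S) * (x_j ΔC - ΔD_j) ≤ x_j * (∑_M ΔD - S ΔC)
        have hQ := hsplit
        have hgam : (1 - S) * (x j * (C v - C w) - (D j v - D j w))
            ≤ x j * ((∑ k ∈ M, (D k v - D k w)) - S * (C v - C w)) := by
          have hexp : x j * (∑ k ∈ N \ M, (D k v - D k w))
              + x j * (∑ k ∈ M, (D k v - D k w)) = x j * (C v - C w) := by
            rw [← mul_add, hsplit]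
          nlinarith [hxQ]
        have hchain : (∑ k ∈ M, (D k v - D k w)) - S * (C v - C w) ≤ g - Gf v := by
          linarith [hL1', hGfw]
        have hx' : 0 ≤ x j := hx j hj
        calc (1 - S) * ((A j v - D j v) - Bs j v)
            ≤ (1 - S) * (x j * (C v - C w) - (D j v - D j w)) :=
              mul_le_mul_of_nonneg_left hterm h1S.le
          _ ≤ x j * ((∑ k ∈ M, (D k v - D k w)) - S * (C v - C w)) := hgam
          _ ≤ x j * (g - Gf v) := mul_le_mul_of_nonneg_left hchain hx'
      · -- j idle at v
        have heq : A j v = D j v := le_antisymm (not_lt.1 hb) (hDA j (hM hj) v)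
        have hterm0 : (A j v - D j v) - Bs j v ≤ 0 := by
          have := hB0 j hj v hv0
          linarith [heq]
        have hgge : 0 ≤ g - Gf v := sub_nonneg.2 (hgG v hv0 hvs)
        have hr : 0 ≤ x j * (g - Gf v) := mul_nonneg (hx j hj) hgge
        have hl : (1 - S) * ((A j v - D j v) - Bs j v) ≤ 0 :=
          mul_nonpos_of_nonneg_of_nonpos h1S.le hterm0
        linarith
    have hsum := Finset.sum_le_sum hperj
    have hl : ∑ j ∈ M, (1 - S) * ((A j v - D j v) - Bs j v) = (1 - S) * Gf v :=
      (Finset.mul_sum _ _ _).symm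
    have hr : ∑ j ∈ M, x j * (g - Gf v) = S * (g - Gf v) :=
      (Finset.sum_mul _ _ _).symm
    rw [hl, hr] at hsum
    exact hsum
  -- conclude g ≤ 0 hence Gf s ≤ 0
  have hvSg : ∀ v ∈ Set.Icc (0:ℝ) s, Gf v ≤ S * g := by
    intro v hv
    have h := hmaster v hv.1 hv.2
    nlinarith
  have hgle : g ≤ S * g := by
    refine csSup_le hgne ?_
    rintro _ ⟨v, hv, rfl⟩
    exact hvSg v hv
  have hgneg : g ≤ 0 := by
    by_contra hgpos
    push_neg at hgpos
    have hlt : S * g < 1 * g := mul_lt_mul_of_pos_right hSlt hgpos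
    rw [one_mul] at hlt
    linarith
  have hGs : Gf s ≤ 0 := (hgG s hs le_rfl).trans hgneg
  -- final assembly
  have hstep1 : ∑ j ∈ M, (D j t - D j s) ≤
      ∑ j ∈ M, ((A j t - A j s) + (A j s - D j s)) :=
    Finset.sum_le_sum fun j hj => by have := hDA j (hM hj) t; linarith
  have hstep2 : ∑ j ∈ M, ((A j t - A j s) + (A j s - D j s))
      = ∑ j ∈ M, (A j t - A j s) + ∑ j ∈ M, (A j s - D j s) := Finset.sum_add_distrib
  have hGsplit : Gf s = ∑ j ∈ M, (A j s - D j s) - ∑ j ∈ M, Bs j s := by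
    rw [hGfeq s]; exact Finset.sum_sub_distrib _ _
  have hstep3 : ∑ j ∈ M, (A j s - D j s) ≤ ∑ j ∈ M, Bs j s := by linarith
  have hstep4 : ∑ j ∈ M, (A j t - A j s) + ∑ j ∈ M, Bs j s
      = ∑ j ∈ M, ((A j t - A j s) + Bs j s) := Finset.sum_add_distrib.symm
  have hstep5 : ∑ j ∈ M, ((A j t - A j s) + Bs j s)
      ≤ ∑ j ∈ M, (Bs j t + x j * (C t - C s)) :=
    Finset.sum_le_sum fun j hj => by have := hBcarry j hj s t hs hst; linarith
  calc ∑ j ∈ M, (D j t - D j s)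
      ≤ ∑ j ∈ M, (A j t - A j s) + ∑ j ∈ M, (A j s - D j s) := by
        rw [← hstep2]; exact hstep1
    _ ≤ ∑ j ∈ M, (A j t - A j s) + ∑ j ∈ M, Bs j s := by linarith
    _ = ∑ j ∈ M, ((A j t - A j s) + Bs j s) := hstep4
    _ ≤ ∑ j ∈ M, (Bs j t + x j * (C t - C s)) := hstep5
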